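/- There is no twice differentiable function u : [0, ∞) → ℝ satisfying u''(r) = (3/4)(u(r)^{−1/3} − u(r)) for all r ≥ 0 with u(r) > 1 for all r ≥ 0. -/

import Mathlib

open Set

/-- Mean value bound: if `f` has derivative `f'` within `Ici 0` and `f' ≤ C` on `Ici a`
(with `0 ≤ a`), then `f y - f a ≤ C * (y - a)` for `y ≥ a`. -/
lemma mvt_le_aux {f f' : ℝ → ℝ} {a : ℝ} (ha : 0 ≤ a)
    (hf : ∀ x ∈ Set.Ici (0 : ℝ), HasDerivWithinAt f (f' x) (Set.Ici 0) x)
    {C : ℝ} (hC : ∀ x ∈ Set.Ici a, f' x ≤ C) {y : ℝ} (hy : a ≤ y) :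
    f y - f a ≤ C * (y - a) := by
  have hderiv : ∀ z ∈ interior (Set.Ici a), HasDerivAt f (f' z) z := by
    rw [interior_Ici]
    intro z hz
    exact (hf z (ha.trans (le_of_lt hz))).hasDerivAt
      (Ici_mem_nhds (lt_of_le_of_lt ha hz))
  refine (convex_Ici a).image_sub_le_mul_sub_of_deriv_le
    (fun z hz => ((hf z (ha.trans hz)).mono (Set.Ici_subset_Ici.2 ha)).continuousWithinAt)
    (fun z hz => (hderiv z hz).differentiableAt.differentiableWithinAt)
    (fun z hz => by
      rw [(hderiv z hz).deriv]
      exact hC z (show a ≤ z from le_of_lt (by rwa [interior_Ici] at hz)))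
    a self_mem_Ici y hy hy

/-- There is no twice differentiable `u : [0, ∞) → ℝ` with
`u'' = (3/4)(u^{-1/3} - u)` and `u > 1` everywhere. -/
theorem stmt_7 :
    ¬ ∃ u u' u'' : ℝ → ℝ,
      (∀ r ∈ Set.Ici (0 : ℝ), HasDerivWithinAt u (u' r) (Set.Ici 0) r) ∧
      (∀ r ∈ Set.Ici (0 : ℝ), HasDerivWithinAt u' (u'' r) (Set.Ici 0) r) ∧
      (∀ r ∈ Set.Ici (0 : ℝ),
        u'' r = (3 / 4) * ((u r) ^ (-(1 : ℝ) / 3) - u r)) ∧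
      (∀ r ∈ Set.Ici (0 : ℝ), 1 < u r) := by
  rintro ⟨u, u', u'', hu, hu', heq, hgt⟩
  -- u'' is negative everywhere
  have hneg : ∀ r ∈ Set.Ici (0 : ℝ), u'' r < 0 := by
    intro r hr
    have h1 : (1 : ℝ) < u r := hgt r hr
    have h2 : (u r) ^ (-(1 : ℝ) / 3) < 1 :=
      Real.rpow_lt_one_of_one_lt_of_neg h1 (by norm_num)
    rw [heq r hr]; nlinarith
  -- Step 1: there is t ≥ 0 with u' t < 0
  have hstep1 : ∃ t : ℝ, 0 ≤ t ∧ u' t < 0 := by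
    by_contra h
    push_neg at h
    -- u' ≥ 0 everywhere on Ici 0, so u is monotone, hence u ≥ u 0
    have hmono : MonotoneOn u (Set.Ici (0 : ℝ)) := by
      refine monotoneOn_of_hasDerivWithinAt_nonneg (f' := u') (convex_Ici 0)
        (fun z hz => (hu z hz).continuousWithinAt)
        (fun z hz => ?_) (fun z hz => ?_)
      · rw [interior_Ici] at hz
        exact ((hu z (show (0:ℝ) ≤ z from le_of_lt hz)).mono Set.Ioi_subset_Ici_self).mono
          (by rw [interior_Ici])
      · rw [interior_Ici] at hz
        exact h z (le_of_lt hz)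
    have hu0 : (1 : ℝ) < u 0 := hgt 0 Set.self_mem_Ici
    set c : ℝ := (3 / 4) * ((u 0) ^ (-(1 : ℝ) / 3) - u 0) with hc
    have hcneg : c < 0 := by
      have h2 : (u 0) ^ (-(1 : ℝ) / 3) < 1 :=
        Real.rpow_lt_one_of_one_lt_of_neg hu0 (by norm_num)
      rw [hc]; nlinarith
    have hbound : ∀ r ∈ Set.Ici (0 : ℝ), u'' r ≤ c := by
      intro r hr
      have hur : u 0 ≤ u r := hmono self_mem_Ici hr hr
      have hrp : (u r) ^ (-(1 : ℝ) / 3) ≤ (u 0) ^ (-(1 : ℝ) / 3) :=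
        Real.rpow_le_rpow_of_nonpos (by linarith) hur (by norm_num)
      rw [heq r hr, hc]; nlinarith
    -- apply MVT to u' with bound c, at large r
    set R : ℝ := (u' 0 + 1) / (-c) with hR
    have hRpos : 0 ≤ R := by
      apply div_nonneg (by linarith [h 0 le_rfl]) (by linarith)
    have := mvt_le_aux (le_refl 0) hu' (fun x hx => hbound x hx) hRpos
    have hcR : c * (R - 0) = -(u' 0 + 1) := by
      have hne : -c ≠ 0 := by intro hh; nlinarith [hcneg]
      rw [hR]; field_simp [neg_ne_zero.mp hne]; ring
    rw [hcR] at this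
    have : u' R < 0 := by linarith
    exact absurd (h R hRpos) (not_le.mpr this)
  obtain ⟨t, ht, hut⟩ := hstep1
  -- Step 2: u' is antitone, so u' r ≤ u' t for r ≥ t, and u decays linearly to below 1
  have hanti : ∀ r ∈ Set.Ici t, u' r ≤ u' t := by
    have hA : AntitoneOn u' (Set.Ici (0 : ℝ)) := by
      refine antitoneOn_of_hasDerivWithinAt_nonpos (f' := u'') (convex_Ici 0)
        (fun z hz => (hu' z hz).continuousWithinAt)
        (fun z hz => ?_) (fun z hz => ?_)
      · rw [interior_Ici] at hz
        exact ((hu' z (show (0:ℝ) ≤ z from le_of_lt hz)).mono Set.Ioi_subset_Ici_self).mono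
          (by rw [interior_Ici])
      · rw [interior_Ici] at hz
        exact (hneg z (show (0:ℝ) ≤ z from le_of_lt hz)).le
    intro r hr
    exact hA ht (ht.trans hr) hr
  set R : ℝ := t + (u t) / (-u' t) with hR
  have hut1 : (1 : ℝ) < u t := hgt t ht
  have hRt : t ≤ R := by
    rw [hR]
    have : 0 ≤ u t / (-u' t) := div_nonneg (by linarith) (by linarith)
    linarith
  have := mvt_le_aux ht hu hanti hRt
  have hcR : u' t * (R - t) = -(u t) := by
    have hne : -u' t ≠ 0 := by intro hh; nlinarith [hut]
    rw [hR]; field_simp [neg_ne_zero.mp hne]; ring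
  rw [hcR] at this
  have : u R ≤ 0 := by linarith
  linarith [hgt R (ht.trans hRt)]
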